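/- arXiv:2504.15064 — 3 statements merged into one kernel-verified Lean document; each statement's English description precedes it below -/
import Mathlib

section
/- Let D be a 2×2 complex matrix. The linear map x ↦ D·x on ℂ² is a derivation of the 2-dimensional Mock-Lie algebra A_{1,2} if and only if D_{01} = 0 and D_{11} = 2·D_{00} (indices 0-based, D_{ij} denoting the entry in row i, column j). Equivalently, the derivations of A_{1,2} are exactly the linear maps whose matrix relative to the basis (e_1, e_2) has the form [[a, 0], [b, 2a]] for a, b ∈ ℂ. -/
/-- The product of the 2-dimensional Mock-Lie algebra `A_{1,2}`:
`e_1 · e_1 = e_2`, all other products of basis vectors zero. -/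
def mulA12 (x y : Fin 2 → ℂ) : Fin 2 → ℂ := ![0, x 0 * y 0]

/-- `x ↦ D · x` is a derivation of `A_{1,2}` iff `D 0 1 = 0` and `D 1 1 = 2 * D 0 0`,
i.e. `D` has the form `[[a, 0], [b, 2a]]`. -/
theorem derivation_A12_iff (D : Matrix (Fin 2) (Fin 2) ℂ) :
    (∀ x y : Fin 2 → ℂ,
        D.mulVec (mulA12 x y) = mulA12 (D.mulVec x) y + mulA12 x (D.mulVec y)) ↔
      (D 0 1 = 0 ∧ D 1 1 = 2 * D 0 0) := by
  constructor
  · intro h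
    have h1 := congrFun (h ![1, 0] ![1, 0]) 0
    have h2 := congrFun (h ![1, 0] ![1, 0]) 1
    simp [mulA12, Matrix.mulVec, dotProduct, Fin.sum_univ_two] at h1 h2
    constructor
    · exact h1
    · linear_combination h2
  · rintro ⟨h1, h2⟩
    intro x y
    funext i
    fin_cases i <;>
      simp [mulA12, Matrix.mulVec, dotProduct, Fin.sum_univ_two, h1, h2] <;> ring
end

section
/- Let D be a 3×3 complex matrix (entries D_{ij}, 0-based indexing, row i and column j). The linear map x ↦ D·x on ℂ³ is a derivation of the 3-dimensional Mock-Lie algebra A_{1,2} ⊕ A_{0,1} if and only if D_{01} = 0, D_{02} = 0, D_{21} = 0, and D_{11} = 2·D_{00}. Equivalently, the derivations are exactly the linear maps whose matrix relative to the basis (e_1, e_2, e_3) has the form [[d_{11}, 0, 0], [d_{21}, 2d_{11}, d_{23}], [d_{31}, 0, d_{33}]]. -/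
/-- The product of the 3-dimensional Mock-Lie algebra `A_{1,2} ⊕ A_{0,1}`:
`e_1 · e_1 = e_2`, all other products of basis vectors zero. -/
def mulA12A01 (x y : Fin 3 → ℂ) : Fin 3 → ℂ := ![0, x 0 * y 0, 0]

/-- `x ↦ D · x` is a derivation of `A_{1,2} ⊕ A_{0,1}` iff
`D 0 1 = 0`, `D 0 2 = 0`, `D 2 1 = 0` and `D 1 1 = 2 * D 0 0`. -/
theorem derivation_A12_A01_iff (D : Matrix (Fin 3) (Fin 3) ℂ) :
    (∀ x y : Fin 3 → ℂ,
        D.mulVec (mulA12A01 x y) = mulA12A01 (D.mulVec x) y + mulA12A01 x (D.mulVec y)) ↔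
      (D 0 1 = 0 ∧ D 0 2 = 0 ∧ D 2 1 = 0 ∧ D 1 1 = 2 * D 0 0) := by
  constructor
  · intro h
    have h1 := h ![1,0,0] ![1,0,0]
    have h2 := h ![0,0,1] ![1,0,0]
    have e10 := congrFun h1 0
    have e11 := congrFun h1 1
    have e12 := congrFun h1 2
    have e21 := congrFun h2 1
    simp [mulA12A01, Matrix.mulVec, dotProduct, Fin.sum_univ_three] at e10 e11 e12 e21
    exact ⟨e10, e21.symm, e12, by linear_combination e11⟩
  · rintro ⟨h1, h2, h3, h4⟩ x y
    funext i
    fin_cases i <;>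
      simp [mulA12A01, Matrix.mulVec, dotProduct, Fin.sum_univ_three, h1, h2, h3, h4] <;>
      ring
end

section
/- Let D be a 4×4 complex matrix (entries D_{ij}, 0-based indexing, row i and column j). The linear map x ↦ D·x on ℂ⁴ is a derivation of the 4-dimensional Mock-Lie algebra A_{1,2} ⊕ A²_{0,1} if and only if D_{01} = D_{02} = D_{03} = 0, D_{21} = 0, D_{31} = 0, and D_{11} = 2·D_{00}. Equivalently, the derivations are exactly the linear maps whose matrix relative to the basis (e_1, e_2, e_3, e_4) has the form [[d_{11}, 0, 0, 0], [d_{21}, 2d_{11}, d_{23}, d_{24}], [d_{31}, 0, d_{33}, d_{34}], [d_{41}, 0, d_{43}, d_{44}]]. -/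
/-- The product of the 4-dimensional Mock-Lie algebra `A_{1,2} ⊕ A²_{0,1}`:
`e_1 · e_1 = e_2`, all other products of basis vectors zero. -/
def mulA12A01sq (x y : Fin 4 → ℂ) : Fin 4 → ℂ := ![0, x 0 * y 0, 0, 0]

/-- `x ↦ D · x` is a derivation of `A_{1,2} ⊕ A²_{0,1}` iff
`D 0 1 = D 0 2 = D 0 3 = 0`, `D 2 1 = 0`, `D 3 1 = 0` and `D 1 1 = 2 * D 0 0`. -/
theorem derivation_A12_A01sq_iff (D : Matrix (Fin 4) (Fin 4) ℂ) :
    (∀ x y : Fin 4 → ℂ,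
        D.mulVec (mulA12A01sq x y) = mulA12A01sq (D.mulVec x) y + mulA12A01sq x (D.mulVec y)) ↔
      (D 0 1 = 0 ∧ D 0 2 = 0 ∧ D 0 3 = 0 ∧ D 2 1 = 0 ∧ D 3 1 = 0 ∧
        D 1 1 = 2 * D 0 0) := by
  constructor
  · intro h
    have h1 := congrFun (h ![1,0,0,0] ![1,0,0,0])
    have h2 := congrFun (h ![1,0,0,0] ![0,0,1,0]) 1
    have h3 := congrFun (h ![1,0,0,0] ![0,0,0,1]) 1
    have e0 := h1 0
    have e1 := h1 1
    have e2 := h1 2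
    have e3 := h1 3
    simp [mulA12A01sq, Matrix.mulVec, dotProduct, Fin.sum_univ_four] at e0 e1 e2 e3 h2 h3
    refine ⟨e0, h2.symm, h3.symm, e2, e3, by linear_combination e1⟩
  · rintro ⟨h01, h02, h03, h21, h31, h11⟩ x y
    funext i
    fin_cases i <;>
      simp [mulA12A01sq, Matrix.mulVec, dotProduct, Fin.sum_univ_four, h01, h02, h03,
        h21, h31, h11] <;> ring
end
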